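/- The formal power series 2 log(1+x)/(2+x) is a Hurwitz series, i.e., n! times its x^n coefficient is an integer for every n. -/

import Mathlib

open PowerSeries

/-- A Hurwitz series: a formal power series `∑ f_n x^n / n!` over `ℚ` with all
`f_n = n! · (coefficient of x^n)` integers. -/
def IsHurwitz (f : PowerSeries ℚ) : Prop :=
  ∀ n : ℕ, ∃ m : ℤ, (n.factorial : ℚ) * PowerSeries.coeff (R := ℚ) n f = (m : ℚ)

/-- The formal power series `log(1+x) = ∑_{n≥1} (-1)^{n-1} x^n/n` over `ℚ`. -/
noncomputable def logOnePlusX : PowerSeries ℚ :=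
  PowerSeries.mk fun n => if n = 0 then 0 else (-1 : ℚ) ^ (n - 1) / n

namespace HurwitzAux

open Finset

/-- Partial sums `S n = ∑_{j=1}^n 2^j/j`. -/
noncomputable def S (n : ℕ) : ℚ := ∑ k ∈ range n, (2:ℚ)^(k+1)/(k+1)

/-- Coefficients of `2 log(1+x)/(2+x)`. -/
noncomputable def a (n : ℕ) : ℚ := (-1:ℚ)^(n-1) * S n / 2^n

/-- Girard–Waring terms (for `α = β = 2`), reflected index form. -/
noncomputable def F (n k : ℕ) : ℚ :=
  (-1:ℚ)^k * 4^(n-k) * ((n:ℚ)/((n-k : ℕ):ℚ)) * (Nat.choose (n-k) k : ℚ)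

noncomputable def D (n : ℕ) : ℚ := ∑ k ∈ range n, F n k

lemma c_rec (m k : ℕ) (hk : k ≤ m) :
    ((m+3:ℕ):ℚ)/((m+2-k:ℕ):ℚ) * (Nat.choose (m+2-k) (k+1) : ℚ)
      = ((m+2:ℕ):ℚ)/((m+1-k:ℕ):ℚ) * (Nat.choose (m+1-k) (k+1) : ℚ)
        + ((m+1:ℕ):ℚ)/((m+1-k:ℕ):ℚ) * (Nat.choose (m+1-k) k : ℚ) := by
  set p := m + 1 - k with hpdef
  have hp1 : 1 ≤ p := by omega
  have hq : m + 2 - k = p + 1 := by omega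
  have hm1 : m + 1 = p + k := by omega
  rw [hq]
  have hpascal : (Nat.choose (p+1) (k+1) : ℚ) = Nat.choose p k + Nat.choose p (k+1) := by
    rw [Nat.choose_succ_succ]; push_cast; ring
  have h2 : ((k:ℚ)+1) * (Nat.choose p (k+1) : ℚ) = ((p:ℚ) - k) * (Nat.choose p k : ℚ) := by
    rcases le_or_gt k p with h | h
    · have := Nat.choose_succ_right_eq p k
      have hc : ((Nat.choose p (k+1) * (k+1) : ℕ) : ℚ) = ((Nat.choose p k * (p - k) : ℕ) : ℚ) := by
        exact_mod_cast congrArg (Nat.cast (R := ℚ)) this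
      push_cast [Nat.cast_sub h] at hc
      linarith [hc]
    · rw [Nat.choose_eq_zero_of_lt h, Nat.choose_eq_zero_of_lt (by omega)]
      simp
  have hP : (0:ℚ) < (p:ℚ) := by exact_mod_cast hp1
  have hmQ : (m:ℚ) = (k:ℚ) + (p:ℚ) - 1 := by
    have : ((m+1:ℕ):ℚ) = ((p+k:ℕ):ℚ) := by exact_mod_cast congrArg (Nat.cast (R := ℚ)) hm1
    push_cast at this; linarith
  rw [hpascal]
  push_cast
  rw [hmQ]
  field_simp
  linear_combination -h2

lemma F_rec (m k : ℕ) (hk : k ≤ m) :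
    F (m+3) (k+1) = 4 * F (m+2) (k+1) - 4 * F (m+1) k := by
  have hc := c_rec m k hk
  unfold F
  rw [show m+3-(k+1) = (m+1-k)+1 by omega, show m+2-(k+1) = m+1-k by omega,
      show m+1-k+1 = m+2-k by omega]
  rw [show (m+2-k) = (m+1-k)+1 by omega] at hc ⊢
  push_cast at hc ⊢
  rw [pow_succ]
  linear_combination ((-1:ℚ)^(k+1) * 4^(m+1-k) * 4) * hc

lemma D_rec (m : ℕ) : D (m+3) = 4 * D (m+2) - 4 * D (m+1) := by
  unfold D
  rw [Finset.sum_range_succ (f := F (m+3)), Finset.sum_range_succ' (f := F (m+3)),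
      Finset.sum_range_succ' (f := F (m+2))]
  have htop : F (m+3) (m+2) = 0 := by
    unfold F
    rw [show m+3-(m+2) = 1 by omega, Nat.choose_eq_zero_of_lt (by omega)]
    simp
  have h0 : F (m+3) 0 = 4 * F (m+2) 0 := by
    unfold F
    simp only [Nat.sub_zero, Nat.choose_zero_right, Nat.cast_one, pow_zero]
    rw [show m+3 = (m+2)+1 by omega, pow_succ]
    push_cast
    have h2 : ((m:ℚ)+2) ≠ 0 := by positivity
    have h3 : ((m:ℚ)+3) ≠ 0 := by positivity
    field_simp
  have hsum : ∑ k ∈ range (m+1), F (m+3) (k+1)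
      = ∑ k ∈ range (m+1), (4 * F (m+2) (k+1) - 4 * F (m+1) k) := by
    apply Finset.sum_congr rfl
    intro k hk
    exact F_rec m k (by simpa using Nat.lt_succ_iff.mp (Finset.mem_range.mp hk))
  rw [hsum, htop, h0]
  rw [Finset.sum_sub_distrib, ← Finset.mul_sum, ← Finset.mul_sum]
  ring

lemma D_eq (n : ℕ) (hn : 1 ≤ n) : D n = 2^(n+1) := by
  induction n using Nat.strong_induction_on with
  | _ n IH =>
    match n, hn with
    | 1, _ => norm_num [D, F, Finset.sum_range_one]
    | 2, _ =>
      norm_num [D, F, Finset.sum_range_succ, Finset.sum_range_one]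
    | (m+3), _ =>
      rw [D_rec m, IH (m+2) (by omega) (by omega), IH (m+1) (by omega) (by omega)]
      rw [show m+3+1 = (m+2)+1+1 by omega]
      ring_nf

/-- The j-indexed form `∑_{j=1}^n (-1)^{n-j} 4^j C(j,n-j)/j = 2^(n+1)/n`. -/
lemma Dj_eq (n : ℕ) (hn : 1 ≤ n) :
    ∑ k ∈ range n, (-1:ℚ)^(n-1-k) * 4^(k+1)/(k+1) * (Nat.choose (k+1) (n-1-k) : ℚ)
      = 2^(n+1)/n := by
  have hrefl := Finset.sum_range_reflect (F n) n
  have hterm : ∀ k ∈ range n,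
      F n (n-1-k) = (n:ℚ) * ((-1:ℚ)^(n-1-k) * 4^(k+1)/(k+1) * (Nat.choose (k+1) (n-1-k) : ℚ)) := by
    intro k hk
    have hk' : k < n := Finset.mem_range.mp hk
    unfold F
    rw [show n - (n-1-k) = k+1 by omega]
    push_cast
    ring
  have hD : D n = (n:ℚ) * ∑ k ∈ range n,
      (-1:ℚ)^(n-1-k) * 4^(k+1)/(k+1) * (Nat.choose (k+1) (n-1-k) : ℚ) := by
    rw [D, ← hrefl, Finset.mul_sum]
    exact Finset.sum_congr rfl hterm
  have hn' : ((n:ℚ)) ≠ 0 := Nat.cast_ne_zero.mpr (by omega)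
  rw [eq_div_iff hn', mul_comm, ← hD, D_eq n hn]

/-- Key identity: `2 S n = ∑_{j=1}^n (-1)^{n-j} 4^j C(j-1,n-j)/j`. -/
lemma two_S_eq (n : ℕ) :
    2 * S n = ∑ k ∈ range n, (-1:ℚ)^(n-1-k) * 4^(k+1)/(k+1) * (Nat.choose k (n-1-k) : ℚ) := by
  induction n with
  | zero => simp [S]
  | succ n IH =>
    have hDj := Dj_eq (n+1) (by omega)
    rw [S, Finset.sum_range_succ, ← S]
    rw [Finset.sum_range_succ, mul_add, IH]
    rw [Finset.sum_range_succ] at hDj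
    have hsplit : ∀ k ∈ range n,
        (-1:ℚ)^(n+1-1-k) * 4^(k+1)/(k+1) * (Nat.choose k (n+1-1-k) : ℚ)
          = (-1:ℚ)^(n-1-k) * 4^(k+1)/(k+1) * (Nat.choose k (n-1-k) : ℚ)
            + (-1:ℚ)^(n+1-1-k) * 4^(k+1)/(k+1) * (Nat.choose (k+1) (n+1-1-k) : ℚ) := by
      intro k hk
      have hk' : k < n := Finset.mem_range.mp hk
      rw [show n+1-1-k = (n-1-k)+1 by omega]
      rw [Nat.choose_succ_succ]
      rcases Nat.exists_eq_add_of_le (by omega : k ≤ n - 1) with ⟨i, hi⟩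
      rw [show (n-1-k) = i by omega]
      push_cast
      ring
    rw [Finset.sum_congr rfl hsplit, Finset.sum_add_distrib]
    simp only [Nat.add_sub_cancel, show n-n = 0 by omega, pow_zero, Nat.choose_zero_right,
      Nat.cast_one] at hDj ⊢
    push_cast at hDj ⊢
    linear_combination -hDj

lemma mk_a_mul : (PowerSeries.mk a) * (PowerSeries.C (R := ℚ) 2 + PowerSeries.X)
    = PowerSeries.C (R := ℚ) 2 * logOnePlusX := by
  ext n
  rw [mul_add, map_add, PowerSeries.coeff_mul_C, PowerSeries.coeff_C_mul, logOnePlusX,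
    PowerSeries.coeff_mk]
  cases n with
  | zero =>
    simp [PowerSeries.coeff_zero_mul_X, a, S]
  | succ m =>
    rw [PowerSeries.coeff_succ_mul_X, PowerSeries.coeff_mk, PowerSeries.coeff_mk,
      if_neg (Nat.succ_ne_zero m)]
    cases m with
    | zero => norm_num [a, S]
    | succ j =>
      unfold a
      rw [show j+1+1-1 = j+1 by omega, show j+1-1 = j by omega]
      rw [S, Finset.sum_range_succ, ← S]
      have h1 : ((j:ℚ)+1+1) ≠ 0 := by positivity
      have h2 : ((2:ℚ))^(j+1) ≠ 0 := by positivity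
      push_cast
      field_simp
      ring

lemma series_eq :
    PowerSeries.C (R := ℚ) 2 * logOnePlusX * (PowerSeries.C (R := ℚ) 2 + PowerSeries.X)⁻¹
      = PowerSeries.mk a := by
  have hc : PowerSeries.constantCoeff (R := ℚ) (PowerSeries.C (R := ℚ) 2 + PowerSeries.X) ≠ 0 := by
    simp
  calc PowerSeries.C (R := ℚ) 2 * logOnePlusX * (PowerSeries.C (R := ℚ) 2 + PowerSeries.X)⁻¹
      = (PowerSeries.mk a) * ((PowerSeries.C (R := ℚ) 2 + PowerSeries.X)
          * (PowerSeries.C (R := ℚ) 2 + PowerSeries.X)⁻¹) := by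
        rw [← mk_a_mul]; ring
    _ = PowerSeries.mk a := by
        rw [PowerSeries.mul_inv_cancel _ hc, mul_one]

lemma integrality (n : ℕ) : ∃ m : ℤ, (n.factorial : ℚ) * a n = (m : ℚ) := by
  have e1 : (n.factorial : ℚ) * a n
      = ∑ k ∈ range n, ((-1:ℚ)^(n-1) * (n.factorial:ℚ) / 2^(n+1))
          * ((-1:ℚ)^(n-1-k) * 4^(k+1)/(k+1) * (Nat.choose k (n-1-k) : ℚ)) := by
    rw [← Finset.mul_sum, ← two_S_eq]
    unfold a
    have h2 : ((2:ℚ))^n ≠ 0 := by positivity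
    field_simp
    ring
  have mem : (n.factorial : ℚ) * a n ∈ (Int.castRingHom ℚ).range := by
    rw [e1]
    apply Subring.sum_mem
    intro k hk
    have hk' : k < n := Finset.mem_range.mp hk
    rcases le_or_gt n (2*k+1) with hcase | hcase
    · have hdvd : (k+1) ∣ n.factorial := Nat.dvd_factorial (Nat.succ_pos k) hk'
      obtain ⟨c, hc⟩ := hdvd
      refine RingHom.mem_range.mpr ⟨(-1)^(n-1) * (-1)^(n-1-k) * 2^(2*k+1-n)
        * (c : ℤ) * (Nat.choose k (n-1-k) : ℤ), ?_⟩
      have hfac : (c : ℚ) * ((k:ℚ)+1) = (n.factorial : ℚ) := by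
        have hq := congrArg (Nat.cast (R := ℚ)) hc
        push_cast at hq
        linarith
      have hpow : (2:ℚ)^(2*k+1-n) * 2^(n+1) = 4^(k+1) := by
        rw [← pow_add, show 2*k+1-n + (n+1) = 2*(k+1) by omega, pow_mul]
        norm_num
      have hk1 : ((k:ℚ)+1) ≠ 0 := by positivity
      have h2 : ((2:ℚ))^(n+1) ≠ 0 := by positivity
      simp only [eq_comm, map_mul, map_pow, map_neg, map_one, map_ofNat, Int.coe_castRingHom]
      push_cast
      field_simp
      linear_combination ((Nat.choose k (n-1-k):ℚ)
        * ((c:ℚ) * ((k:ℚ)+1))) * hpow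
        + ((Nat.choose k (n-1-k):ℚ) * 4^(k+1)) * hfac
    · have : Nat.choose k (n-1-k) = 0 := Nat.choose_eq_zero_of_lt (by omega)
      rw [this]
      simp
  obtain ⟨m, hm⟩ := RingHom.mem_range.mp mem
  exact ⟨m, hm.symm⟩

end HurwitzAux

/-- The formal power series `2·log(1+x)/(2+x)` is a Hurwitz series. -/
theorem two_log_div_isHurwitz :
    IsHurwitz (PowerSeries.C (R := ℚ) 2 * logOnePlusX * (PowerSeries.C (R := ℚ) 2 + PowerSeries.X)⁻¹) := by
  intro n
  rw [HurwitzAux.series_eq, PowerSeries.coeff_mk]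
  exact HurwitzAux.integrality n
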